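/- Let X'_u, Z'_u, D'_u, X'_v, Z'_v and Z'_w be self-adjoint involutions on a tensor-product Hilbert space (operators on distinct tensor factors commute), (u,v) an edge of a graph G, and |ψ'⟩ a unit vector satisfying: S'_u|ψ'⟩ = S'_v|ψ'⟩ = |ψ'⟩; ⟨ψ'|Z'_u Z'^{N_u}|ψ'⟩ = 0; ⟨ψ'|D'_u Z'^{N_u}|ψ'⟩ = 1/√2; and ⟨ψ'|D'_u X'_v Z'^{N_v∖{u}}|ψ'⟩ = 1/√2. Then X'_u Z'_u |ψ'⟩ = -Z'_u X'_u |ψ'⟩. -/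

import Mathlib

/-- If `S'_u ψ = S'_v ψ = ψ`, `⟨ψ|Z'_u Z'^{N_u}|ψ⟩ = 0`,
`⟨ψ|D'_u Z'^{N_u}|ψ⟩ = 1/√2` and `⟨ψ|D'_u X'_v Z'^{N_v∖{u}}|ψ⟩ = 1/√2`, then
`X'_u Z'_u ψ = -Z'_u X'_u ψ`. -/
theorem anticommute_of_D_measurements {V : Type*} [Fintype V] [DecidableEq V]
    {H : Type*} [NormedAddCommGroup H] [InnerProductSpace ℂ H] [CompleteSpace H]
    (G : SimpleGraph V) [DecidableRel G.Adj]
    (X' Z' : V → (H →L[ℂ] H)) (D' : H →L[ℂ] H)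
    (hXsa : ∀ w, IsSelfAdjoint (X' w)) (hZsa : ∀ w, IsSelfAdjoint (Z' w))
    (hDsa : IsSelfAdjoint D')
    (hX2 : ∀ w, X' w * X' w = 1) (hZ2 : ∀ w, Z' w * Z' w = 1) (hD2 : D' * D' = 1)
    (hXX : ∀ a b, a ≠ b → Commute (X' a) (X' b))
    (hXZ : ∀ a b, a ≠ b → Commute (X' a) (Z' b))
    (hZZ : ∀ a b, a ≠ b → Commute (Z' a) (Z' b))
    (u v : V) (huv : G.Adj u v)
    (hDX : ∀ w, w ≠ u → Commute (D') (X' w))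
    (hDZ : ∀ w, w ≠ u → Commute (D') (Z' w))
    (ψ : H) (hψ : ‖ψ‖ = 1)
    (hSu : (X' u * (G.neighborFinset u).noncommProd Z'
      (fun a _ b _ hab => hZZ a b hab)) ψ = ψ)
    (hSv : (X' v * (G.neighborFinset v).noncommProd Z'
      (fun a _ b _ hab => hZZ a b hab)) ψ = ψ)
    (hZZexp : (inner ℂ ψ ((Z' u * (G.neighborFinset u).noncommProd Z'
      (fun a _ b _ hab => hZZ a b hab)) ψ) : ℂ) = 0)
    (hDZexp : (inner ℂ ψ ((D' * (G.neighborFinset u).noncommProd Z'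
      (fun a _ b _ hab => hZZ a b hab)) ψ) : ℂ) = (Real.sqrt 2 : ℂ)⁻¹)
    (hDXZexp : (inner ℂ ψ ((D' * (X' v * ((G.neighborFinset v).erase u).noncommProd Z'
      (fun a _ b _ hab => hZZ a b hab))) ψ) : ℂ) = (Real.sqrt 2 : ℂ)⁻¹) :
    (X' u * Z' u) ψ = -((Z' u * X' u) ψ) := by
  classical
  set Nu := (G.neighborFinset u).noncommProd Z' (fun a _ b _ hab => hZZ a b hab) with hNudef
  set Nvu := ((G.neighborFinset v).erase u).noncommProd Z' (fun a _ b _ hab => hZZ a b hab)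
    with hNvudef
  have hu_nmem : u ∉ G.neighborFinset u := by simp
  have hv_nmem : v ∉ (G.neighborFinset v).erase u := by simp
  have hu_mem : u ∈ G.neighborFinset v := by simpa using huv.symm
  have hvu : v ≠ u := huv.symm.ne
  have hcommZuNu : Commute (Z' u) Nu :=
    Finset.noncommProd_commute _ _ _ _
      (fun x hx => hZZ u x (fun h => hu_nmem (h ▸ hx)))
  have hcommXuNu : Commute (X' u) Nu :=
    Finset.noncommProd_commute _ _ _ _
      (fun x hx => hXZ u x (fun h => hu_nmem (h ▸ hx)))
  have hcommDNu : Commute D' Nu :=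
    Finset.noncommProd_commute _ _ _ _
      (fun x hx => hDZ x (fun h => hu_nmem (h ▸ hx)))
  have hcommDNvu : Commute D' Nvu :=
    Finset.noncommProd_commute _ _ _ _
      (fun x hx => hDZ x (Finset.ne_of_mem_erase hx))
  have hcommXuNvu : Commute (X' u) Nvu :=
    Finset.noncommProd_commute _ _ _ _
      (fun x hx => hXZ u x (fun h => (Finset.ne_of_mem_erase hx) h.symm))
  have hcommXvNvu : Commute (X' v) Nvu :=
    Finset.noncommProd_commute _ _ _ _
      (fun x hx => hXZ v x (fun h => hv_nmem (h ▸ hx)))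
  have hsq : ∀ (s : Finset V),
      s.noncommProd Z' (fun a _ b _ hab => hZZ a b hab) *
        s.noncommProd Z' (fun a _ b _ hab => hZZ a b hab) = 1 := by
    intro s
    have hcomm : (↑s : Set V).Pairwise fun x y => Commute (Z' x) (Z' y) :=
      fun x _ y _ h => hZZ x y h
    rw [← Finset.noncommProd_mul_distrib Z' Z' hcomm hcomm hcomm]
    exact (Finset.noncommProd_eq_pow_card _ _ _ 1 (fun x _ => hZ2 x)).trans (one_pow _)
  have hNu2 : Nu * Nu = 1 := hsq _
  have hNvu2 : Nvu * Nvu = 1 := hsq _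
  set C := X' v * Nvu with hCdef
  have hC2 : C * C = 1 := by
    have h : C * C = (X' v * X' v) * (Nvu * Nvu) := by
      rw [hCdef, mul_assoc, ← mul_assoc (Nvu), ← hcommXvNvu.eq, mul_assoc, ← mul_assoc]
    rw [h, hX2, hNvu2, one_mul]
  have hcommDC : Commute D' C := (hDX v hvu).mul_right hcommDNvu
  have hcommXuC : Commute (X' u) C := (hXX u v huv.ne).mul_right hcommXuNvu
  have hNv : (G.neighborFinset v).noncommProd Z' (fun a _ b _ hab => hZZ a b hab)
      = Z' u * Nvu := (Finset.mul_noncommProd_erase _ hu_mem _ _).symm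
  have mulapp : ∀ (A B : H →L[ℂ] H) (x : H), (A * B) x = A (B x) := fun _ _ _ => rfl
  have sa_move : ∀ (T : H →L[ℂ] H), IsSelfAdjoint T → ∀ x y : H,
      (inner ℂ (T x) y : ℂ) = inner ℂ x (T y) := by
    intro T hT x y
    rw [← ContinuousLinearMap.adjoint_inner_left, hT.adjoint_eq]
  set a := Nu ψ with hadef
  set b := C ψ with hbdef
  set d := D' ψ with hddef
  have ha : X' u ψ = a := by
    have h1 := congrArg (X' u) hSu
    rw [mulapp, ← mulapp, hX2, ContinuousLinearMap.one_apply] at h1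
    exact h1.symm
  have hb : Z' u ψ = b := by
    have h0 : (X' v * (Z' u * Nvu)) ψ = ψ := by rw [← hNv]; exact hSv
    rw [← mul_assoc, (hXZ v u hvu).eq, mul_assoc] at h0
    have h1 : (Z' u * C) ψ = ψ := h0
    have h2 := congrArg (Z' u) h1
    rw [mulapp, ← mulapp, hZ2, ContinuousLinearMap.one_apply] at h2
    exact h2.symm
  have hinner_psi : (inner ℂ ψ ψ : ℂ) = 1 := by
    rw [inner_self_eq_norm_sq_to_K, hψ]; norm_num
  have unit_of : ∀ (T : H →L[ℂ] H), IsSelfAdjoint T → T * T = 1 →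
      (inner ℂ (T ψ) (T ψ) : ℂ) = 1 := by
    intro T hT hT2
    rw [sa_move T hT, ← mulapp, hT2, ContinuousLinearMap.one_apply, hinner_psi]
  have haa : (inner ℂ a a : ℂ) = 1 := by
    rw [← ha]; exact unit_of _ (hXsa u) (hX2 u)
  have hbb : (inner ℂ b b : ℂ) = 1 := by
    rw [← hb]; exact unit_of _ (hZsa u) (hZ2 u)
  have hdd : (inner ℂ d d : ℂ) = 1 := by
    rw [hddef]; exact unit_of _ hDsa hD2
  have hba : (inner ℂ b a : ℂ) = 0 := by
    rw [← hb, sa_move _ (hZsa u), hadef, ← mulapp]; exact hZZexp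
  have hab : (inner ℂ a b : ℂ) = 0 := by
    rw [← inner_conj_symm, hba, map_zero]
  set c : ℂ := (Real.sqrt 2 : ℂ)⁻¹ with hcdef
  have hcconj : (starRingEnd ℂ) c = c := by
    rw [hcdef, map_inv₀, Complex.conj_ofReal]
  have hcc : c * c = 1 / 2 := by
    have h2 : (Real.sqrt 2 : ℂ) * (Real.sqrt 2 : ℂ) = 2 := by
      norm_cast
      rw [Real.mul_self_sqrt (by norm_num)]
    rw [hcdef, ← mul_inv, h2]
    norm_num
  have hda : (inner ℂ d a : ℂ) = c := by
    rw [hddef, sa_move _ hDsa, hadef, ← mulapp]; exact hDZexp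
  have hdb : (inner ℂ d b : ℂ) = c := by
    rw [hddef, sa_move _ hDsa, hbdef, ← mulapp]; exact hDXZexp
  have had : (inner ℂ a d : ℂ) = c := by
    rw [← inner_conj_symm, hda, hcconj]
  have hbd : (inner ℂ b d : ℂ) = c := by
    rw [← inner_conj_symm, hdb, hcconj]
  have hd_eq : d = c • (a + b) := by
    have hz : (inner ℂ (d - c • (a + b)) (d - c • (a + b)) : ℂ) = 0 := by
      simp only [inner_sub_left, inner_sub_right, inner_add_left, inner_add_right,
        inner_smul_left, inner_smul_right, hda, hdb, had, hbd, haa, hbb, hab, hba, hdd, hcconj]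
      linear_combination (-2 : ℂ) * hcc
    have h := inner_self_eq_zero.mp hz
    rwa [sub_eq_zero] at h
  have hDa : D' a = Nu d := by
    rw [hadef, hddef, ← mulapp, ← mulapp, hcommDNu.eq]
  have hDb : D' b = C d := by
    rw [hbdef, hddef, ← mulapp, ← mulapp, hcommDC.eq]
  have hNua : Nu a = ψ := by rw [hadef, ← mulapp, hNu2, ContinuousLinearMap.one_apply]
  have hCb : C b = ψ := by rw [hbdef, ← mulapp, hC2, ContinuousLinearMap.one_apply]
  have hDd : D' d = ψ := by rw [hddef, ← mulapp, hD2, ContinuousLinearMap.one_apply]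
  have hkey : Nu b + C a = 0 := by
    have h2 : ψ = (c * c) • ((ψ + Nu b) + (C a + ψ)) := by
      calc ψ = D' d := hDd.symm
        _ = c • (Nu d + C d) := by rw [hd_eq, map_smul, map_add, hDa, hDb, hd_eq]
        _ = c • (Nu (c • (a + b)) + C (c • (a + b))) := by rw [← hd_eq]
        _ = (c * c) • ((Nu a + Nu b) + (C a + C b)) := by
            rw [map_smul, map_smul, map_add, map_add, ← smul_add, smul_smul]
        _ = (c * c) • ((ψ + Nu b) + (C a + ψ)) := by rw [hNua, hCb]
    rw [hcc] at h2
    have h3 : ((1:ℂ)/2) • (Nu b + C a) = 0 := by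
      have hmod : ((1:ℂ)/2) • ((ψ + Nu b) + (C a + ψ)) - ψ = ((1:ℂ)/2) • (Nu b + C a) := by
        module
      rw [← hmod, ← h2, sub_self]
    rcases smul_eq_zero.mp h3 with h5 | h5
    · norm_num at h5
    · exact h5
  have hNub : Nu b = (Z' u * X' u) ψ := by
    rw [← hb, ← mulapp, ← hcommZuNu.eq, mulapp, ← hadef, ← ha, mulapp]
  have hCa : C a = (X' u * Z' u) ψ := by
    rw [← ha, ← mulapp, ← hcommXuC.eq, mulapp, ← hbdef, ← hb, mulapp]
  rw [hNub, hCa] at hkey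
  rw [add_comm] at hkey
  exact eq_neg_of_add_eq_zero_left hkey
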